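/- Let (X, D) be a locally compact, complete metric space, let α > 1, and let Ω ⊆ X be an open set. Let (d_n)_{n∈ℕ} be distances on Ω with α⁻¹·D ≤ d_n ≤ α·D on Ω × Ω for every n, and suppose d_n → d uniformly on compact subsets of Ω × Ω for some distance d on Ω. Assume moreover that D_α(Ω) ≠ ∅. Then the continuous extensions satisfy d̄_n → d̄ uniformly on compact subsets of Ω̄ × Ω̄. -/

import Mathlib

open Filter MeasureTheory Set
open scoped ENNReal Topology

/-- Length of the curve `γ` on the interval `[a, b]`, with respect to the
(candidate) distance `d`, defined as a supremum over finite partitions. -/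
noncomputable def pathLengthOn {E : Type*} (d : E → E → ℝ) (γ : ℝ → E) (a b : ℝ) : ℝ≥0∞ :=
  ⨆ (k : ℕ) (t : Fin (k + 1) → ℝ) (_ : Monotone t) (_ : t 0 = a) (_ : t (Fin.last k) = b),
    ∑ i : Fin k, ENNReal.ofReal (d (γ (t i.succ)) (γ (t i.castSucc)))

/-- Length of the curve `γ : [0,1] → E` with respect to `d`. -/
noncomputable def pathLength {E : Type*} (d : E → E → ℝ) (γ : ℝ → E) : ℝ≥0∞ :=
  pathLengthOn d γ 0 1

/-- `d` is a distance on `E`. -/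
def IsDistance {E : Type*} (d : E → E → ℝ) : Prop :=
  (∀ x y, d x y = d y x) ∧ (∀ x y z, d x z ≤ d x y + d y z) ∧ ∀ x y, d x y = 0 ↔ x = y

/-- `γ : [0,1] → E` is a Lipschitz curve with respect to `d`. -/
def LipCurve {E : Type*} (d : E → E → ℝ) (γ : ℝ → E) : Prop :=
  ∃ K : ℝ, ∀ s ∈ Icc (0 : ℝ) 1, ∀ t ∈ Icc (0 : ℝ) 1, d (γ s) (γ t) ≤ K * |s - t|

/-- `(E, d)` is a length space: `d x y` is the infimum of lengths of Lipschitz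
curves `γ : [0,1] → E` joining `x` to `y`. -/
def IsLengthDist {E : Type*} (d : E → E → ℝ) : Prop :=
  ∀ x y : E, ENNReal.ofReal (d x y) =
    ⨅ (γ : ℝ → E) (_ : LipCurve d γ) (_ : γ 0 = x) (_ : γ 1 = y), pathLength d γ

/-- `d ∈ 𝒟_α(Ω)` : `d` is a distance on `Ω` making it a length space and satisfying
`α⁻¹ D ≤ d ≤ α D`. -/
def MemD {X : Type*} [MetricSpace X] (α : ℝ) (Ω : Set X) (d : Ω → Ω → ℝ) : Prop :=
  IsDistance d ∧ IsLengthDist d ∧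
    ∀ x y : Ω, α⁻¹ * dist (x : X) (y : X) ≤ d x y ∧ d x y ≤ α * dist (x : X) (y : X)

/-- Uniform convergence `dn → d` on compact subsets of `E × E`. -/
def TendstoUnifCompactly {E : Type*} [TopologicalSpace E]
    (dn : ℕ → E → E → ℝ) (d : E → E → ℝ) : Prop :=
  ∀ K : Set (E × E), IsCompact K → ∀ ε : ℝ, 0 < ε →
    ∃ N : ℕ, ∀ n ≥ N, ∀ p ∈ K, |dn n p.1 p.2 - d p.1 p.2| < ε

/-- `e` is a continuous extension of `d : Ω → Ω → ℝ` to the closure of `Ω`. -/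
def IsContExt {X : Type*} [MetricSpace X] (Ω : Set X) (d : Ω → Ω → ℝ)
    (e : closure Ω → closure Ω → ℝ) : Prop :=
  Continuous (fun p : closure Ω × closure Ω => e p.1 p.2) ∧
    ∀ x y : Ω, e ⟨x, subset_closure x.2⟩ ⟨y, subset_closure y.2⟩ = d x y

/-- `(E, d)` is a geodesic space: any two points are joined by a constant-speed curve
`γ : [0,1] → E` whose length on each subinterval `[t,s]` equals `d (γ t) (γ s)`. -/
def IsGeodesicDist {E : Type*} (d : E → E → ℝ) : Prop :=
  ∀ x y : E, ∃ γ : ℝ → E, γ 0 = x ∧ γ 1 = y ∧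
    (∀ t s : ℝ, 0 ≤ t → t ≤ s → s ≤ 1 →
      pathLengthOn d γ t s = pathLength d γ * ENNReal.ofReal (s - t)) ∧
    ∀ t s : ℝ, 0 ≤ t → t ≤ s → s ≤ 1 →
      pathLengthOn d γ t s = ENNReal.ofReal (d (γ t) (γ s))

/-- Uniform convergence on `[0,1]` of a sequence of curves. -/
def UnifConvCurves {E : Type*} [MetricSpace E] (γn : ℕ → ℝ → E) (γ : ℝ → E) : Prop :=
  ∀ ε : ℝ, 0 < ε → ∃ N : ℕ, ∀ n ≥ N, ∀ t ∈ Icc (0 : ℝ) 1, dist (γn n t) (γ t) < ε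

/-- Γ-convergence of the length functionals `L_{dn}` to `L_d` on the space of
Lipschitz curves `[0,1] → E` with the topology of uniform convergence. -/
def GammaConvLengths {E : Type*} [MetricSpace E] (dn : ℕ → E → E → ℝ) (d : E → E → ℝ) : Prop :=
  (∀ (γn : ℕ → ℝ → E) (γ : ℝ → E),
      (∀ n, LipCurve (fun x y : E => dist x y) (γn n)) →
      LipCurve (fun x y : E => dist x y) γ → UnifConvCurves γn γ →
      pathLength d γ ≤ liminf (fun n => pathLength (dn n) (γn n)) atTop) ∧
  ∀ γ : ℝ → E, LipCurve (fun x y : E => dist x y) γ →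
    ∃ γn : ℕ → ℝ → E, (∀ n, LipCurve (fun x y : E => dist x y) (γn n)) ∧
      UnifConvCurves γn γ ∧
      limsup (fun n => pathLength (dn n) (γn n)) atTop ≤ pathLength d γ

lemma denseRange_incl {X : Type*} [MetricSpace X] (Ω : Set X) :
    DenseRange (fun x : Ω => (⟨x, subset_closure x.2⟩ : closure Ω)) := by
  intro y
  rw [Metric.mem_closure_iff]
  intro ε hε
  have hy := y.2
  rw [Metric.mem_closure_iff] at hy
  obtain ⟨x, hxΩ, hx⟩ := hy ε hε
  refine ⟨(⟨x, subset_closure hxΩ⟩ : closure Ω), ⟨⟨x, hxΩ⟩, rfl⟩, ?_⟩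
  simpa [Subtype.dist_eq] using hx

lemma ext_lip {X : Type*} [MetricSpace X] (Ω : Set X) (α : ℝ)
    (d : Ω → Ω → ℝ) (hd : IsDistance d)
    (hbd : ∀ x y : Ω, d x y ≤ α * dist (x : X) (y : X))
    (e : closure Ω → closure Ω → ℝ) (he : IsContExt Ω d e) :
    ∀ p q : closure Ω × closure Ω,
      |e p.1 p.2 - e q.1 q.2| ≤ α * (dist (p.1 : X) (q.1 : X) + dist (p.2 : X) (q.2 : X)) := by
  set i : Ω → closure Ω := fun x => ⟨x, subset_closure x.2⟩ with hi
  have hdr : DenseRange (Prod.map (Prod.map i i) (Prod.map i i)) :=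
    ((denseRange_incl Ω).prodMap (denseRange_incl Ω)).prodMap
      ((denseRange_incl Ω).prodMap (denseRange_incl Ω))
  set C : Set ((closure Ω × closure Ω) × (closure Ω × closure Ω)) :=
    {z | |e z.1.1 z.1.2 - e z.2.1 z.2.2| ≤
      α * (dist (z.1.1 : X) (z.2.1 : X) + dist (z.1.2 : X) (z.2.2 : X))} with hC
  have hcont : Continuous fun z : (closure Ω × closure Ω) × (closure Ω × closure Ω) =>
      |e z.1.1 z.1.2 - e z.2.1 z.2.2| := ((he.1.comp continuous_fst).sub (he.1.comp continuous_snd)).abs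
  have hcont2 : Continuous fun z : (closure Ω × closure Ω) × (closure Ω × closure Ω) =>
      α * (dist (z.1.1 : X) (z.2.1 : X) + dist (z.1.2 : X) (z.2.2 : X)) := by fun_prop
  have hclosed : IsClosed C := isClosed_le hcont hcont2
  have hsub : range (Prod.map (Prod.map i i) (Prod.map i i)) ⊆ C := by
    rintro _ ⟨⟨⟨x, y⟩, ⟨x', y'⟩⟩, rfl⟩
    simp only [hC, mem_setOf_eq, Prod.map]
    have h1 : d x y - d x' y' ≤ d x x' + d y y' := by
      have t1 := hd.2.1 x x' y
      have t2 := hd.2.1 x' y' y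
      have t3 := hd.1 y' y
      linarith
    have h2 : d x' y' - d x y ≤ d x x' + d y y' := by
      have t1 := hd.2.1 x' x y'
      have t2 := hd.2.1 x y y'
      have t3 := hd.1 x' x
      have t4 := hd.1 y y'
      linarith
    have habs : |d x y - d x' y'| ≤ d x x' + d y y' := abs_sub_le_iff.mpr ⟨h1, h2⟩
    rw [he.2, he.2]
    calc |d x y - d x' y'| ≤ d x x' + d y y' := habs
      _ ≤ α * dist (x : X) (x' : X) + α * dist (y : X) (y' : X) :=
        add_le_add (hbd x x') (hbd y y')
      _ = α * (dist (x : X) (x' : X) + dist (y : X) (y' : X)) := by ring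
  intro p q
  have : (p, q) ∈ C := by
    have : closure (range (Prod.map (Prod.map i i) (Prod.map i i))) ⊆ C :=
      closure_minimal hsub hclosed
    exact this (hdr (p, q))
  exact this

/-- If `dn → d` uniformly on compact subsets of `Ω × Ω`, then the
continuous extensions converge uniformly on compact subsets of `Ω̄ × Ω̄`. -/
theorem stmt4 {X : Type*} [MetricSpace X] [LocallyCompactSpace X] [CompleteSpace X]
    (Ω : Set X) (hΩ : IsOpen Ω) (α : ℝ) (hα : 1 < α)
    (hne : ∃ d₀ : Ω → Ω → ℝ, MemD α Ω d₀)
    (dn : ℕ → Ω → Ω → ℝ) (hdn : ∀ n, IsDistance (dn n))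
    (hbd : ∀ n, ∀ x y : Ω,
      α⁻¹ * dist (x : X) (y : X) ≤ dn n x y ∧ dn n x y ≤ α * dist (x : X) (y : X))
    (d : Ω → Ω → ℝ) (hd : IsDistance d)
    (hconv : TendstoUnifCompactly dn d)
    (en : ℕ → closure Ω → closure Ω → ℝ) (hen : ∀ n, IsContExt Ω (dn n) (en n))
    (e : closure Ω → closure Ω → ℝ) (he : IsContExt Ω d e) :
    TendstoUnifCompactly en e := by
  -- α is positive
  have hα0 : (0:ℝ) < α := by linarith
  -- Lipschitz bounds for the extensions
  have hlip_en : ∀ n, ∀ p q : closure Ω × closure Ω,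
      |en n p.1 p.2 - en n q.1 q.2| ≤
        α * (dist (p.1 : X) (q.1 : X) + dist (p.2 : X) (q.2 : X)) :=
    fun n => ext_lip Ω α (dn n) (hdn n) (fun x y => (hbd n x y).2) (en n) (hen n)
  have hdbd : ∀ x y : Ω, d x y ≤ α * dist (x : X) (y : X) := by
    intro x y
    refine le_of_forall_pos_le_add ?_
    intro ε hε
    obtain ⟨N, hN⟩ := hconv {(x, y)} isCompact_singleton ε hε
    have h1 := hN N le_rfl (x, y) rfl
    have h2 := (hbd N x y).2
    have := abs_lt.mp h1
    simp only at this h2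
    linarith [this.1, this.2]
  have hlip_e : ∀ p q : closure Ω × closure Ω,
      |e p.1 p.2 - e q.1 q.2| ≤
        α * (dist (p.1 : X) (q.1 : X) + dist (p.2 : X) (q.2 : X)) :=
    ext_lip Ω α d hd hdbd e he
  intro K hK ε hε
  set δ : ℝ := ε / (24 * α) with hδdef
  have hδ : 0 < δ := div_pos hε (by linarith)
  -- choose nearby points of Ω
  have hch : ∀ p : closure Ω × closure Ω, ∃ q : Ω × Ω,
      dist (p.1 : X) (q.1 : X) < δ ∧ dist (p.2 : X) (q.2 : X) < δ := by
    intro p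
    have h1 := p.1.2
    have h2 := p.2.2
    rw [Metric.mem_closure_iff] at h1 h2
    obtain ⟨x, hxΩ, hx⟩ := h1 δ hδ
    obtain ⟨y, hyΩ, hy⟩ := h2 δ hδ
    exact ⟨(⟨x, hxΩ⟩, ⟨y, hyΩ⟩), hx, hy⟩
  choose q hq1 hq2 using hch
  -- finite subcover
  obtain ⟨t, htK, hcov⟩ := hK.elim_nhds_subcover (fun p => Metric.ball p δ)
    (fun p _ => Metric.ball_mem_nhds p hδ)
  obtain ⟨N, hN⟩ := hconv (q '' (t : Set (closure Ω × closure Ω)))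
    ((t.finite_toSet.image q).isCompact) (ε / 3) (by linarith)
  refine ⟨N, fun n hn p hp => ?_⟩
  obtain ⟨c, hct, hpc⟩ := by
    have := hcov hp
    simpa only [Set.mem_iUnion, exists_prop] using this
  have hpc' : dist p c < δ := Metric.mem_ball.mp hpc
  set qq := q c with hqq
  -- distances from p to qq
  have hd1 : dist (p.1 : X) ((qq.1 : Ω) : X) < 2 * δ := by
    have t1 : dist (p.1 : X) (c.1 : X) < δ := by
      have hle : dist p.1 c.1 ≤ dist p c := by
        rw [Prod.dist_eq]; exact le_max_left _ _
      have := hle.trans_lt hpc'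
      simpa [Subtype.dist_eq] using this
    have t2 := hq1 c
    calc dist (p.1 : X) ((qq.1 : Ω) : X) ≤ dist (p.1 : X) (c.1 : X) + dist (c.1 : X) ((qq.1 : Ω) : X) :=
          dist_triangle _ _ _
      _ < δ + δ := add_lt_add t1 t2
      _ = 2 * δ := by ring
  have hd2 : dist (p.2 : X) ((qq.2 : Ω) : X) < 2 * δ := by
    have t1 : dist (p.2 : X) (c.2 : X) < δ := by
      have hle : dist p.2 c.2 ≤ dist p c := by
        rw [Prod.dist_eq]; exact le_max_right _ _
      have := hle.trans_lt hpc'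
      simpa [Subtype.dist_eq] using this
    have t2 := hq2 c
    calc dist (p.2 : X) ((qq.2 : Ω) : X) ≤ dist (p.2 : X) (c.2 : X) + dist (c.2 : X) ((qq.2 : Ω) : X) :=
          dist_triangle _ _ _
      _ < δ + δ := add_lt_add t1 t2
      _ = 2 * δ := by ring
  -- middle term
  have hmid : |dn n qq.1 qq.2 - d qq.1 qq.2| < ε / 3 :=
    hN n hn qq (Set.mem_image_of_mem q hct)
  set i1 : closure Ω := ⟨qq.1, subset_closure qq.1.2⟩
  set i2 : closure Ω := ⟨qq.2, subset_closure qq.2.2⟩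
  have hlipn := hlip_en n p (i1, i2)
  have hlipe := hlip_e (i1, i2) p
  have heq1 : en n i1 i2 = dn n qq.1 qq.2 := (hen n).2 qq.1 qq.2
  have heq2 : e i1 i2 = d qq.1 qq.2 := he.2 qq.1 qq.2
  simp only at hlipn hlipe
  have hb1 : |en n p.1 p.2 - en n i1 i2| < α * (4 * δ) := by
    refine hlipn.trans_lt ?_
    have : dist (p.1 : X) (i1 : X) + dist (p.2 : X) (i2 : X) < 4 * δ := by
      have e1 : dist (p.1 : X) (i1 : X) < 2 * δ := hd1
      have e2 : dist (p.2 : X) (i2 : X) < 2 * δ := hd2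
      linarith
    exact (mul_lt_mul_iff_right₀ hα0).mpr this
  have hb3 : |e i1 i2 - e p.1 p.2| < α * (4 * δ) := by
    refine hlipe.trans_lt ?_
    have : dist (i1 : X) (p.1 : X) + dist (i2 : X) (p.2 : X) < 4 * δ := by
      have e1 : dist (i1 : X) (p.1 : X) < 2 * δ := by rw [dist_comm]; exact hd1
      have e2 : dist (i2 : X) (p.2 : X) < 2 * δ := by rw [dist_comm]; exact hd2
      linarith
    exact (mul_lt_mul_iff_right₀ hα0).mpr this
  have h4δ : α * (4 * δ) = ε / 6 := by
    field_simp [hδdef]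
    rw [hδdef]; field_simp [hα0.ne']
    norm_num
  calc |en n p.1 p.2 - e p.1 p.2|
      ≤ |en n p.1 p.2 - en n i1 i2| + |en n i1 i2 - e i1 i2| + |e i1 i2 - e p.1 p.2| :=
        abs_sub_le_iff.mpr ⟨by
          have := abs_sub_le (en n p.1 p.2) (en n i1 i2) (e p.1 p.2)
          have := abs_sub_le (en n i1 i2) (e i1 i2) (e p.1 p.2)
          linarith [abs_sub_le (en n p.1 p.2) (en n i1 i2) (e p.1 p.2),
            abs_sub_le (en n i1 i2) (e i1 i2) (e p.1 p.2),
            le_abs_self (en n p.1 p.2 - en n i1 i2), le_abs_self (en n i1 i2 - e i1 i2),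
            le_abs_self (e i1 i2 - e p.1 p.2)], by
          linarith [neg_abs_le (en n p.1 p.2 - en n i1 i2), neg_abs_le (en n i1 i2 - e i1 i2),
            neg_abs_le (e i1 i2 - e p.1 p.2)]⟩
    _ < ε / 6 + ε / 3 + ε / 6 := by
        rw [heq1, heq2]
        rw [heq1] at hb1
        rw [heq2] at hb3
        linarith [hb1, hb3, hmid, h4δ]
    _ < ε := by linarith
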